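/- In the real/complex cone setup, the complex cone 𝒞_ℂ is linearly convex: for each g ∈ B_ℂ ∖ 𝒞_ℂ there exists ℓ ∈ Ĉ'_ℂ such that ℓ(g) = 0. -/

import Mathlib

open Complex Set ENNReal

namespace ConeSetup

variable {B : Type*} [NormedAddCommGroup B] [NormedSpace ℝ B]

/-- Complex scalar multiplication on the complexification `B × B`:
`(a+ib)(x,y) = (ax − by, ay + bx)`. -/
def cSmul (z : ℂ) (p : B × B) : B × B :=
  (z.re • p.1 - z.im • p.2, z.re • p.2 + z.im • p.1)

/-- The "real" norm `‖(x,y)‖_r = √(‖x‖² + ‖y‖²)` on the complexification. -/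
noncomputable def rNorm (p : B × B) : ℝ :=
  Real.sqrt (‖p.1‖ ^ 2 + ‖p.2‖ ^ 2)

/-- The complexification norm `‖(x,y)‖ = sup_{θ∈[0,2π]} ‖e^{iθ}(x,y)‖_r`. -/
noncomputable def cNorm (p : B × B) : ℝ :=
  sSup ((fun θ : ℝ => rNorm (cSmul (Complex.exp (θ * Complex.I)) p)) ''
    Set.Icc 0 (2 * Real.pi))

/-- The real cone `𝒞_ℝ = {h ≠ 0 : ℓ(h) ≥ 0 for all ℓ ∈ S}`. -/
def realCone (S : Set (B →L[ℝ] ℝ)) : Set B :=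
  {h | h ≠ 0 ∧ ∀ ℓ ∈ S, 0 ≤ ℓ h}

/-- The complex cone `𝒞_ℂ = ℂ_* ⋅ (𝒞_ℝ + i 𝒞_ℝ)`. -/
def complexCone (S : Set (B →L[ℝ] ℝ)) : Set (B × B) :=
  {p | ∃ z : ℂ, z ≠ 0 ∧ ∃ x ∈ realCone S, ∃ y ∈ realCone S, p = cSmul z (x, y)}

/-- A map `B × B → ℂ` is a (continuous) complex-linear functional for the complex
structure `cSmul`. -/
def IsCLinearFunctional (ℓ : B × B → ℂ) : Prop :=
  (∀ p q : B × B, ℓ (p + q) = ℓ p + ℓ q) ∧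
  (∀ (z : ℂ) (p : B × B), ℓ (cSmul z p) = z * ℓ p) ∧
  Continuous ℓ

/-- The dual real cone `𝒞'_ℝ = {ℓ ∈ B'_ℝ : ℓ(h) ≥ 0 for all h ∈ 𝒞_ℝ}`. -/
def dualRealCone (S : Set (B →L[ℝ] ℝ)) : Set (B →L[ℝ] ℝ) :=
  {ℓ | ∀ h ∈ realCone S, 0 ≤ ℓ h}

/-- The dual complex cone `𝒞'_ℂ = {ℓ ∈ B'_ℂ : ℓ(h) ≠ 0 for all h ∈ 𝒞_ℂ}`. -/
def dualComplexCone (S : Set (B →L[ℝ] ℝ)) : Set (B × B → ℂ) :=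
  {ℓ | IsCLinearFunctional ℓ ∧ ∀ h ∈ complexCone S, ℓ h ≠ 0}

/-- The action of a real functional on the complexification: `ℓ(x+iy) = ℓ(x) + iℓ(y)`. -/
noncomputable def cext (ℓ : B →L[ℝ] ℝ) (p : B × B) : ℂ :=
  (ℓ p.1 : ℂ) + (ℓ p.2 : ℂ) * Complex.I

/-- `𝒞̊'_ℝ = {ℓ ∈ 𝒞'_ℝ : ℓ(x) > 0 for all x ∈ 𝒞_ℝ}`. -/
def interiorDualRealCone (S : Set (B →L[ℝ] ℝ)) : Set (B →L[ℝ] ℝ) :=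
  {ℓ | ℓ ∈ dualRealCone S ∧ ∀ x ∈ realCone S, 0 < ℓ x}

/-- `Ĉ'_ℂ = {±ℓ ± ip : ℓ, p ∈ 𝒞̊'_ℝ}`. -/
def hatDualComplexCone (S : Set (B →L[ℝ] ℝ)) : Set (B × B → ℂ) :=
  {q | ∃ ℓ ∈ interiorDualRealCone S, ∃ p ∈ interiorDualRealCone S,
    ∃ ε₁ ∈ ({1, -1} : Set ℝ), ∃ ε₂ ∈ ({1, -1} : Set ℝ),
      q = fun v => (ε₁ : ℂ) * cext ℓ v + (ε₂ : ℂ) * Complex.I * cext p v}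

/-- `E_𝒞(h,g) = {ℓ(h)/ℓ(g) : ℓ ∈ 𝒞'_ℂ}`. -/
def gaugeSet (S : Set (B →L[ℝ] ℝ)) (h g : B × B) : Set ℂ :=
  {z | ∃ ℓ ∈ dualComplexCone S, z = ℓ h / ℓ g}

/-- The projective gauge
`δ_𝒞(h,g) = ln( sup_{z∈E_𝒞(h,g)} |z| / inf_{z∈E_𝒞(h,g)} |z| ) = sup_{z,w∈E_𝒞(h,g)} ln|z/w|`,
valued in `[0,∞]`. -/
noncomputable def deltaGauge (S : Set (B →L[ℝ] ℝ)) (h g : B × B) : ℝ≥0∞ :=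
  ⨆ z ∈ gaugeSet S h g, ⨆ w ∈ gaugeSet S h g, ENNReal.ofReal (Real.log (‖z‖ / ‖w‖))

/-- The real/complex cone setup: a separating family `S` of functionals, an order unit `𝕖`
whose cone norm is the norm of `B`, and a functional `𝕞` in the weak-* closed convex hull
of `ℝ₊ ⋅ S` dominating the norm on the cone. -/
structure Setup (B : Type*) [NormedAddCommGroup B] [NormedSpace ℝ B] where
  S : Set (B →L[ℝ] ℝ)
  e : B
  mm : B →L[ℝ] ℝ
  κ : ℝ
  separating : ∀ x : B, (∀ ℓ ∈ S, ℓ x = 0) → x = 0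
  e_mem : e ∈ realCone S
  arch : ∀ h : B, ∃ l : ℝ, 0 ≤ l ∧ ∀ ℓ ∈ S, 0 ≤ ℓ (l • e - h)
  norm_eq : ∀ h : B,
    ‖h‖ = sInf {l : ℝ | 0 ≤ l ∧ ∀ ℓ ∈ S, 0 ≤ ℓ (l • e - h) ∧ 0 ≤ ℓ (l • e + h)}
  κ_pos : 0 < κ
  κ_lt_one : κ < 1
  mm_e : mm e = 1
  mm_lower : ∀ h ∈ realCone S, κ * ‖h‖ ≤ mm h
  mm_star : (⇑mm : B → ℝ) ∈ closure ((fun ℓ : B →L[ℝ] ℝ => (⇑ℓ : B → ℝ)) ''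
    convexHull ℝ {q : B →L[ℝ] ℝ | ∃ c : ℝ, 0 ≤ c ∧ ∃ ℓ ∈ S, q = c • ℓ})

private lemma cSmul_cSmul (z w : ℂ) (p : B × B) :
    cSmul z (cSmul w p) = cSmul (z * w) p := by
  simp only [cSmul, Complex.mul_re, Complex.mul_im, Prod.mk.injEq]
  constructor <;> module

private lemma cSmul_one (p : B × B) : cSmul 1 p = p := by
  simp [cSmul]

private lemma exp_re_im (r θ : ℝ) :
    ((r:ℂ) * Complex.exp ((θ:ℂ) * Complex.I)).re = r * Real.cos θ ∧
    ((r:ℂ) * Complex.exp ((θ:ℂ) * Complex.I)).im = r * Real.sin θ := by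
  constructor <;>
    simp [Complex.exp_mul_I, Complex.mul_re, Complex.mul_im, Complex.cos_ofReal_re,
      Complex.sin_ofReal_re, Complex.cos_ofReal_im, Complex.sin_ofReal_im]

private lemma quarter (Z : Set ℂ) (hZ : ∀ z ∈ Z, ∀ w ∈ Z, 0 ≤ (z * (starRingEnd ℂ) w).re)
    (hne : ∃ z ∈ Z, z ≠ 0) :
    ∃ w : ℂ, ‖w‖ = 1 ∧ ∀ z ∈ Z, 0 ≤ (w * z).re ∧ 0 ≤ (w * z).im := by
  obtain ⟨z₀, hz₀Z, hz₀⟩ := hne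
  have habs0 : (0:ℝ) < ‖z₀‖ := by
    simpa [norm_pos_iff] using hz₀
  set ζ : ℂ := (starRingEnd ℂ) z₀ / (‖z₀‖ : ℂ) with hζdef
  have hζabs : ‖ζ‖ = 1 := by
    rw [hζdef, norm_div, Complex.norm_conj, Complex.norm_real, Real.norm_eq_abs, abs_of_pos habs0,
      div_self (ne_of_gt habs0)]
  have hζne : ζ ≠ 0 := by
    intro h; rw [h] at hζabs; simp at hζabs
  have hre : ∀ z ∈ Z, 0 ≤ (ζ * z).re := by
    intro z hz
    have h1 : 0 ≤ (z * (starRingEnd ℂ) z₀).re := hZ z hz z₀ hz₀Z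
    have h2 : ζ * z = (z * (starRingEnd ℂ) z₀) / (‖z₀‖ : ℂ) := by
      rw [hζdef]; ring
    rw [h2, Complex.div_ofReal_re]
    positivity
  have hpair : ∀ z ∈ Z, ∀ w ∈ Z, 0 ≤ ((ζ * z) * (starRingEnd ℂ) (ζ * w)).re := by
    intro z hz w hw
    have h2 : (ζ * z) * (starRingEnd ℂ) (ζ * w) = z * (starRingEnd ℂ) w := by
      calc (ζ * z) * (starRingEnd ℂ) (ζ * w)
          = (ζ * (starRingEnd ℂ) ζ) * (z * (starRingEnd ℂ) w) := by rw [map_mul]; ring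
        _ = z * (starRingEnd ℂ) w := by
            rw [Complex.mul_conj, Complex.normSq_eq_norm_sq, hζabs]; norm_num
    rw [h2]; exact hZ z hz w hw
  have harg : ∀ z ∈ Z, |(ζ * z).arg| ≤ Real.pi / 2 := fun z hz =>
    Complex.abs_arg_le_pi_div_two_iff.mpr (hre z hz)
  have hdiff : ∀ z ∈ Z, ∀ w ∈ Z, ζ * z ≠ 0 → ζ * w ≠ 0 →
      |(ζ * z).arg - (ζ * w).arg| ≤ Real.pi / 2 := by
    intro z hz w hw hz' hw'
    have h1 : 0 ≤ ((ζ * z) * (starRingEnd ℂ) (ζ * w)).re := hpair z hz w hw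
    set t := ζ * z
    set u := ζ * w
    have hre' : (t * (starRingEnd ℂ) u).re
        = ‖t‖ * ‖u‖ * Real.cos (t.arg - u.arg) := by
      have habst : ‖t‖ ≠ 0 := by simpa [norm_ne_zero_iff] using hz'
      have habsu : ‖u‖ ≠ 0 := by simpa [norm_ne_zero_iff] using hw'
      rw [Real.cos_sub, Complex.cos_arg hz', Complex.sin_arg, Complex.cos_arg hw',
        Complex.sin_arg]
      simp only [Complex.mul_re, Complex.conj_re, Complex.conj_im]
      field_simp
      ring
    rw [hre'] at h1
    have htp : 0 < ‖t‖ := by simpa [norm_pos_iff] using hz'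
    have hup2 : 0 < ‖u‖ := by simpa [norm_pos_iff] using hw'
    have hcos : 0 ≤ Real.cos (t.arg - u.arg) := by
      by_contra hneg
      push_neg at hneg
      have := mul_neg_of_pos_of_neg (mul_pos htp hup2) hneg
      linarith
    by_contra hgt
    push_neg at hgt
    have hb1 := harg z hz
    have hb2 := harg w hw
    have hle : |t.arg - u.arg| ≤ Real.pi := by
      rw [abs_le] at hb1 hb2 ⊢
      constructor <;> [linarith [hb1.1, hb2.2]; linarith [hb1.2, hb2.1]]
    have hcosneg : Real.cos |t.arg - u.arg| < 0 :=
      Real.cos_neg_of_pi_div_two_lt_of_lt hgt (by linarith [Real.pi_pos])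
    rw [Real.cos_abs] at hcosneg
    linarith
  set A : Set ℝ := {a | ∃ z ∈ Z, ζ * z ≠ 0 ∧ a = (ζ * z).arg} with hA
  have hAne : A.Nonempty := ⟨(ζ * z₀).arg, z₀, hz₀Z, mul_ne_zero hζne hz₀, rfl⟩
  have hAbdd : BddBelow A := by
    refine ⟨-(Real.pi / 2), ?_⟩
    rintro a ⟨z, hz, hzne, rfl⟩
    have := harg z hz
    rw [abs_le] at this
    exact this.1
  set α := sInf A with hαdef
  have hαle : ∀ a ∈ A, α ≤ a := fun a ha => csInf_le hAbdd ha
  have hup : ∀ a ∈ A, a ≤ α + Real.pi / 2 := by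
    rintro a ha
    have h3 : a - Real.pi / 2 ≤ α := by
      apply le_csInf hAne
      rintro b ⟨z, hz, hzne, rfl⟩
      obtain ⟨zA, hzA, hzAne, haz⟩ := ha
      have hd := hdiff zA hzA z hz hzAne hzne
      rw [abs_le] at hd
      rw [haz]
      linarith [hd.1, hd.2]
    linarith
  refine ⟨Complex.exp (((-α : ℝ):ℂ) * Complex.I) * ζ, ?_, ?_⟩
  · rw [norm_mul, Complex.norm_exp_ofReal_mul_I, hζabs, one_mul]
  · intro z hz
    by_cases hzz : ζ * z = 0
    · rw [mul_assoc, hzz, mul_zero]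
      simp
    · have haA : (ζ * z).arg ∈ A := ⟨z, hz, hzz, rfl⟩
      have h1 : α ≤ (ζ * z).arg := hαle _ haA
      have h2 : (ζ * z).arg ≤ α + Real.pi / 2 := hup _ haA
      have hζz := Complex.norm_mul_exp_arg_mul_I (ζ * z)
      have hexp : Complex.exp (((-α : ℝ):ℂ) * Complex.I) * ζ * z
          = ((‖ζ * z‖ : ℝ):ℂ)
              * Complex.exp ((((ζ * z).arg - α : ℝ):ℂ) * Complex.I) := by
        calc Complex.exp (((-α : ℝ):ℂ) * Complex.I) * ζ * z
            = Complex.exp (((-α : ℝ):ℂ) * Complex.I) * (ζ * z) := by ring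
          _ = Complex.exp (((-α : ℝ):ℂ) * Complex.I) *
              (((‖ζ * z‖ : ℝ):ℂ)
                * Complex.exp (((ζ * z).arg :ℂ) * Complex.I)) := by rw [hζz]
          _ = ((‖ζ * z‖ : ℝ):ℂ)
              * Complex.exp ((((ζ * z).arg - α : ℝ):ℂ) * Complex.I) := by
              rw [mul_left_comm, ← Complex.exp_add,
                show ((-α : ℝ):ℂ) * Complex.I + ((ζ * z).arg :ℂ) * Complex.I
                  = (((ζ * z).arg - α : ℝ):ℂ) * Complex.I by push_cast; ring]
      rw [hexp]
      have hr : (0:ℝ) ≤ ‖ζ * z‖ := norm_nonneg _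
      rw [(exp_re_im _ _).1, (exp_re_im _ _).2]
      constructor
      · apply mul_nonneg hr
        apply Real.cos_nonneg_of_mem_Icc
        constructor <;> simp <;> linarith [Real.pi_pos]
      · apply mul_nonneg hr
        apply Real.sin_nonneg_of_nonneg_of_le_pi <;> linarith [Real.pi_pos]

private lemma collinear_mem {S : Set (B →L[ℝ] ℝ)} {h : B} (hh : h ∈ realCone S)
    (α β : ℝ) (hαβ : ¬(α = 0 ∧ β = 0)) : (α • h, β • h) ∈ complexCone S := by
  refine ⟨(((α + β) / 2 : ℝ) : ℂ) + (((β - α) / 2 : ℝ) : ℂ) * Complex.I, ?_, h, hh, h, hh, ?_⟩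
  · simp only [ne_eq, Complex.ext_iff, Complex.add_re, Complex.add_im, Complex.ofReal_re,
      Complex.ofReal_im, Complex.mul_re, Complex.mul_im, Complex.I_re, Complex.I_im,
      Complex.zero_re, Complex.zero_im]
    intro hc
    exact hαβ ⟨by linarith [hc.1, hc.2], by linarith [hc.1, hc.2]⟩
  · simp only [cSmul, Complex.add_re, Complex.add_im, Complex.ofReal_re, Complex.ofReal_im,
      Complex.mul_re, Complex.mul_im, Complex.I_re, Complex.I_im, Prod.mk.injEq]
    constructor <;> module

private lemma single_q {S : Set (B →L[ℝ] ℝ)} {φ : B →L[ℝ] ℝ}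
    (hφ : φ ∈ interiorDualRealCone S) {g : B × B} (h1 : φ g.1 = 0) (h2 : φ g.2 = 0) :
    ∃ q ∈ hatDualComplexCone S, q g = 0 := by
  refine ⟨_, ⟨φ, hφ, φ, hφ, 1, Or.inl rfl, 1, Or.inl rfl, rfl⟩, ?_⟩
  simp [cext, h1, h2]

set_option maxHeartbeats 2000000 in
theorem complexCone_linearly_convex' {B : Type*} [NormedAddCommGroup B]
    [NormedSpace ℝ B]
    (S : Set (B →L[ℝ] ℝ)) (mm : B →L[ℝ] ℝ) (κ : ℝ)
    (separating : ∀ x : B, (∀ ℓ ∈ S, ℓ x = 0) → x = 0)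
    (κ_pos : 0 < κ)
    (mm_lower : ∀ h ∈ realCone S, κ * ‖h‖ ≤ mm h) :
    ∀ g : B × B, g ∉ complexCone S →
      ∃ q ∈ hatDualComplexCone S, q g = 0 := by
  intro g hg
  obtain ⟨x, y⟩ := g
  have hmm : mm ∈ interiorDualRealCone S := by
    constructor
    · intro h hh
      have h0 : (0:ℝ) ≤ κ * ‖h‖ := by positivity
      exact le_trans h0 (mm_lower h hh)
    · intro h hh
      have h0 : (0:ℝ) < κ * ‖h‖ := mul_pos κ_pos (norm_pos_iff.mpr hh.1)
      exact lt_of_lt_of_le h0 (mm_lower h hh)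
  by_cases hzero : x = 0 ∧ y = 0
  · exact single_q hmm (by simp [hzero.1]) (by simp [hzero.2])
  -- Step 1: find ℓ₀, p₀ ∈ S with negative "dot product"
  have hSneg : ∃ ℓ ∈ S, ∃ p ∈ S, ℓ x * p x + ℓ y * p y < 0 := by
    by_contra hcon
    push_neg at hcon
    apply hg
    have hex : ∃ ℓ ∈ S, ¬(ℓ x = 0 ∧ ℓ y = 0) := by
      by_contra hall
      push_neg at hall
      apply hzero
      constructor
      · exact separating x fun ℓ hℓ => (hall ℓ hℓ).1
      · exact separating y fun ℓ hℓ => (hall ℓ hℓ).2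
    obtain ⟨ℓ₀, hℓ₀S, hℓ₀⟩ := hex
    set Z : Set ℂ := (fun ℓ : B →L[ℝ] ℝ => ((ℓ x : ℝ) : ℂ) + ((ℓ y : ℝ) : ℂ) * Complex.I) '' S
      with hZdef
    have hZ : ∀ z ∈ Z, ∀ w ∈ Z, 0 ≤ (z * (starRingEnd ℂ) w).re := by
      rintro _ ⟨ℓ, hℓ, rfl⟩ _ ⟨p, hp, rfl⟩
      have := hcon ℓ hℓ p hp
      simp only [map_add, map_mul, Complex.conj_ofReal, Complex.conj_I, Complex.mul_re,
        Complex.add_re, Complex.add_im, Complex.ofReal_re, Complex.ofReal_im, Complex.mul_im,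
        Complex.I_re, Complex.I_im, Complex.neg_re, Complex.neg_im]
      nlinarith [this]
    have hne : ∃ z ∈ Z, z ≠ 0 := by
      refine ⟨_, ⟨ℓ₀, hℓ₀S, rfl⟩, ?_⟩
      simp only [ne_eq, Complex.ext_iff, Complex.add_re, Complex.add_im, Complex.ofReal_re,
        Complex.ofReal_im, Complex.mul_re, Complex.mul_im, Complex.I_re, Complex.I_im,
        Complex.zero_re, Complex.zero_im]
      intro hc
      exact hℓ₀ ⟨by linarith [hc.1, hc.2], by linarith [hc.1, hc.2]⟩
    obtain ⟨w, hw1, hw⟩ := quarter Z hZ hne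
    set c := w.re with hcdef
    set s := w.im with hsdef
    set a := c • x - s • y with hadef
    set b := s • x + c • y with hbdef
    have hone : c ^ 2 + s ^ 2 = 1 := by
      have h1 : Complex.normSq w = 1 := by
        rw [Complex.normSq_eq_norm_sq, hw1]; norm_num
      rw [Complex.normSq_apply] at h1
      nlinarith [h1]
    have hwz : ∀ ℓ ∈ S, 0 ≤ ℓ a ∧ 0 ≤ ℓ b := by
      intro ℓ hℓ
      have hmem : ((ℓ x : ℝ) : ℂ) + ((ℓ y : ℝ) : ℂ) * Complex.I ∈ Z := ⟨ℓ, hℓ, rfl⟩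
      have h2 := hw _ hmem
      have hre : (w * (((ℓ x : ℝ) : ℂ) + ((ℓ y : ℝ) : ℂ) * Complex.I)).re = ℓ a := by
        simp only [hadef, map_sub, map_smul, smul_eq_mul, Complex.mul_re, Complex.add_re,
          Complex.add_im, Complex.ofReal_re, Complex.ofReal_im, Complex.mul_re, Complex.mul_im,
          Complex.I_re, Complex.I_im]
        ring
      have him : (w * (((ℓ x : ℝ) : ℂ) + ((ℓ y : ℝ) : ℂ) * Complex.I)).im = ℓ b := by
        simp only [hbdef, map_add, map_smul, smul_eq_mul, Complex.mul_im, Complex.add_re,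
          Complex.add_im, Complex.ofReal_re, Complex.ofReal_im, Complex.mul_re, Complex.mul_im,
          Complex.I_re, Complex.I_im]
        ring
      exact ⟨hre ▸ h2.1, him ▸ h2.2⟩
    have hwne : w ≠ 0 := by
      intro h; rw [h] at hw1; simp at hw1
    have hcw : (starRingEnd ℂ) w * w = 1 := by
      rw [mul_comm, Complex.mul_conj, Complex.normSq_eq_norm_sq, hw1]
      norm_num
    have habxy : (x, y) = cSmul ((starRingEnd ℂ) w) (a, b) := by
      have h1 : cSmul w (x, y) = (a, b) := by
        simp only [cSmul, hadef, hbdef, hcdef, hsdef]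
        rw [Prod.mk.injEq]
        exact ⟨rfl, add_comm _ _⟩
      rw [← h1, cSmul_cSmul, hcw, cSmul_one]
    have hwcne : (starRingEnd ℂ) w ≠ 0 := by
      simpa using hwne
    by_cases ha : a = 0
    · by_cases hb : b = 0
      · exfalso
        apply hzero
        have hx : x = c • a + s • b - ((c ^ 2 + s ^ 2 - 1) • x) := by
          simp only [hadef, hbdef]
          module
        have hy : y = c • b - s • a - ((c ^ 2 + s ^ 2 - 1) • y) := by
          simp only [hadef, hbdef]
          module
        rw [ha, hb, hone] at hx hy
        simp at hx hy
        exact ⟨hx, hy⟩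
      · have hbC : b ∈ realCone S := ⟨hb, fun ℓ hℓ => (hwz ℓ hℓ).2⟩
        have hx2 : (x, y) = ((-(((starRingEnd ℂ) w).im)) • b, (((starRingEnd ℂ) w).re) • b) := by
          rw [habxy, ha]
          simp [cSmul, neg_smul]
        rw [hx2]
        apply collinear_mem hbC
        intro hc2
        apply hwcne
        exact Complex.ext (by simpa using hc2.2) (by simpa using hc2.1)
    · by_cases hb : b = 0
      · have haC : a ∈ realCone S := ⟨ha, fun ℓ hℓ => (hwz ℓ hℓ).1⟩
        have hx2 : (x, y) = ((((starRingEnd ℂ) w).re) • a, (((starRingEnd ℂ) w).im) • a) := by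
          rw [habxy, hb]
          simp [cSmul]
        rw [hx2]
        apply collinear_mem haC
        intro hc2
        apply hwcne
        exact Complex.ext (by simpa using hc2.1) (by simpa using hc2.2)
      · exact ⟨(starRingEnd ℂ) w, hwcne, a, ⟨ha, fun ℓ hℓ => (hwz ℓ hℓ).1⟩,
          b, ⟨hb, fun ℓ hℓ => (hwz ℓ hℓ).2⟩, habxy⟩
  obtain ⟨ℓ₀, hℓ₀, p₀, hp₀, hneg⟩ := hSneg
  -- Step 2: perturb to strictly positive functionals
  set G : ℝ → ℝ := fun δ => (ℓ₀ x + δ * mm x) * (p₀ x + δ * mm x)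
      + (ℓ₀ y + δ * mm y) * (p₀ y + δ * mm y) with hGdef
  obtain ⟨δ, hδpos, hδ⟩ : ∃ δ : ℝ, 0 < δ ∧ G δ < 0 := by
    have hGc : Continuous G := by fun_prop
    have h0 : G 0 < 0 := by simpa [hGdef] using hneg
    have hev : ∀ᶠ δ in nhds (0:ℝ), G δ < 0 :=
      (hGc.continuousAt).eventually_lt_const h0
    have hev' : ∀ᶠ δ in nhdsWithin (0:ℝ) (Set.Ioi 0), G δ < 0 :=
      hev.filter_mono nhdsWithin_le_nhds
    obtain ⟨δ, h1, h2⟩ := (hev'.and eventually_mem_nhdsWithin).exists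
    exact ⟨δ, h2, h1⟩
  set ℓ₁ : B →L[ℝ] ℝ := ℓ₀ + δ • mm with hℓ₁def
  set p₁ : B →L[ℝ] ℝ := p₀ + δ • mm with hp₁def
  have hSd : ∀ ℓ ∈ S, ℓ ∈ dualRealCone S := fun ℓ hℓ h hh => hh.2 ℓ hℓ
  have hpert : ∀ ℓ₂ ∈ S, (ℓ₂ + δ • mm) ∈ interiorDualRealCone S := by
    intro ℓ₂ hℓ₂
    constructor
    · intro h hh
      have := hSd ℓ₂ hℓ₂ h hh
      have := hmm.1 h hh
      simp only [ContinuousLinearMap.add_apply, ContinuousLinearMap.coe_smul',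
        Pi.smul_apply, smul_eq_mul]
      nlinarith
    · intro h hh
      have h1 := hSd ℓ₂ hℓ₂ h hh
      have h2 := hmm.2 h hh
      simp only [ContinuousLinearMap.add_apply, ContinuousLinearMap.coe_smul',
        Pi.smul_apply, smul_eq_mul]
      nlinarith
  have hℓ₁mem : ℓ₁ ∈ interiorDualRealCone S := hpert ℓ₀ hℓ₀
  have hp₁mem : p₁ ∈ interiorDualRealCone S := hpert p₀ hp₀
  have happ : ∀ v : B, ℓ₁ v = ℓ₀ v + δ * mm v ∧ p₁ v = p₀ v + δ * mm v := by
    intro v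
    simp [hℓ₁def, hp₁def]
  have hf1 : ℓ₁ x * p₁ x + ℓ₁ y * p₁ y < 0 := by
    rw [(happ x).1, (happ x).2, (happ y).1, (happ y).2]
    simpa [hGdef] using hδ
  by_cases hu : ℓ₁ x = 0 ∧ ℓ₁ y = 0
  · exact single_q hℓ₁mem hu.1 hu.2
  have hf0 : 0 < ℓ₁ x ^ 2 + ℓ₁ y ^ 2 := by
    rcases not_and_or.mp hu with h | h <;> positivity
  set F0 : ℝ := ℓ₁ x ^ 2 + ℓ₁ y ^ 2 with hF0
  set F1 : ℝ := ℓ₁ x * p₁ x + ℓ₁ y * p₁ y with hF1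
  have hden : 0 < F0 - F1 := by rw [hF0, hF1]; linarith
  set t : ℝ := F0 / (F0 - F1) with htdef
  have ht0 : 0 < t := div_pos hf0 hden
  have ht1 : t < 1 := (div_lt_one hden).mpr (by rw [hF1]; linarith)
  set p₂ : B →L[ℝ] ℝ := (1 - t) • ℓ₁ + t • p₁ with hp₂def
  have hp₂app : ∀ v : B, p₂ v = (1 - t) * ℓ₁ v + t * p₁ v := by
    intro v; simp [hp₂def]
  have hp₂mem : p₂ ∈ interiorDualRealCone S := by
    constructor
    · intro h hh
      rw [hp₂app]
      have h1 := hℓ₁mem.1 h hh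
      have h2 := hp₁mem.1 h hh
      nlinarith
    · intro h hh
      rw [hp₂app]
      have h1 := hℓ₁mem.2 h hh
      have h2 := hp₁mem.2 h hh
      nlinarith
  have horth : ℓ₁ x * p₂ x + ℓ₁ y * p₂ y = 0 := by
    rw [hp₂app, hp₂app]
    have hkey : (1 - t) * F0 + t * F1 = 0 := by
      rw [htdef]
      field_simp
      ring
    rw [hF0, hF1] at hkey
    ring_nf
    ring_nf at hkey
    linarith
  set c : ℝ := (p₂ y * ℓ₁ x - p₂ x * ℓ₁ y) / F0 with hcdef
  have hF0ne : F0 ≠ 0 := ne_of_gt hf0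
  have hpx : p₂ x = -c * ℓ₁ y := by
    rw [hcdef, hF0]
    have hF0ne' : ℓ₁ x ^ 2 + ℓ₁ y ^ 2 ≠ 0 := hF0ne
    field_simp
    linear_combination ℓ₁ x * horth
  have hpy : p₂ y = c * ℓ₁ x := by
    rw [hcdef, hF0]
    have hF0ne' : ℓ₁ x ^ 2 + ℓ₁ y ^ 2 ≠ 0 := hF0ne
    field_simp
    linear_combination ℓ₁ y * horth
  by_cases hc : c = 0
  · exact single_q hp₂mem (by rw [hpx, hc]; ring) (by rw [hpy, hc]; ring)
  have habs : 0 < |c| := abs_pos.mpr hc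
  set ℓ : B →L[ℝ] ℝ := |c| • ℓ₁ with hℓdef
  have hℓmem : ℓ ∈ interiorDualRealCone S := by
    constructor
    · intro h hh
      have := hℓ₁mem.1 h hh
      simp only [hℓdef, ContinuousLinearMap.coe_smul', Pi.smul_apply, smul_eq_mul]
      positivity
    · intro h hh
      have := hℓ₁mem.2 h hh
      simp only [hℓdef, ContinuousLinearMap.coe_smul', Pi.smul_apply, smul_eq_mul]
      positivity
  set ε₂ : ℝ := if 0 < c then 1 else -1 with hε₂def
  have hε₂mem : ε₂ ∈ ({1, -1} : Set ℝ) := by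
    rw [hε₂def]
    split_ifs <;> simp
  have hstar : ε₂ * c = |c| := by
    rw [hε₂def]
    split_ifs with h
    · rw [abs_of_pos h]; ring
    · rw [abs_of_neg (lt_of_le_of_ne (not_lt.mp h) hc)]; ring
  refine ⟨_, ⟨ℓ, hℓmem, p₂, hp₂mem, 1, Or.inl rfl, ε₂, hε₂mem, rfl⟩, ?_⟩
  have hℓapp : ∀ v : B, ℓ v = |c| * ℓ₁ v := by intro v; simp [hℓdef]
  simp only [cext, hℓapp, hpx, hpy, Complex.ext_iff, Complex.add_re, Complex.add_im,
    Complex.mul_re, Complex.mul_im, Complex.ofReal_re, Complex.ofReal_im, Complex.I_re,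
    Complex.I_im, Complex.one_re, Complex.one_im, Complex.zero_re, Complex.zero_im]
  constructor
  · linear_combination (-(ℓ₁ x)) * hstar
  · linear_combination (-(ℓ₁ y)) * hstar


/-- **Lemma 5.9 (linear convexity of the complex cone).** For each `g ∈ B_ℂ ∖ 𝒞_ℂ`
there exists `ℓ ∈ Ĉ'_ℂ` with `ℓ(g) = 0`. -/
theorem complexCone_linearly_convex {B : Type*} [NormedAddCommGroup B]
    [NormedSpace ℝ B] [CompleteSpace B] (st : Setup B) :
    ∀ g : B × B, g ∉ complexCone st.S →
      ∃ q ∈ hatDualComplexCone st.S, q g = 0 :=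
  complexCone_linearly_convex' st.S st.mm st.κ st.separating st.κ_pos st.mm_lower

end ConeSetup
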